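/- arXiv:2006.05254 — 2 statements merged into one kernel-verified Lean document; each statement's English description precedes it below -/
import Mathlib

section
/- Let f : ℝ → ℝ be 1-Lipschitz and m_f-piecewise linear. Then any GroupSort neural network of grouping size 2 satisfying Assumption 1 that represents f with depth q has size at least (1/2)(q − 1) m_f^{1/(q−1)}. -/
open Matrix

/-- A GroupSort feedforward neural network with grouping size `k`, input dimension `d`
and real output.  `depth` is the number of affine layers (`q` in the paper), so there are
`depth - 1` hidden layers of widths `width 1, …, width (depth - 1)` (each divisible by `k`),
with `width 0 = d` (input) and `width depth = 1` (output). -/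
structure GroupSortNet (k d : ℕ) where
  depth : ℕ
  depth_pos : 1 ≤ depth
  width : ℕ → ℕ
  width_in : width 0 = d
  width_out : width depth = 1
  width_div : ∀ i, 1 ≤ i → i ≤ depth - 1 → k ∣ width i
  V : (i : ℕ) → Matrix (Fin (width (i + 1))) (Fin (width i)) ℝ
  c : (i : ℕ) → Fin (width (i + 1)) → ℝ

/-- The GroupSort activation with grouping size `k`: the coordinates are split into
consecutive groups of `k` elements and each group is sorted in decreasing order. -/
noncomputable def groupSortFun (k : ℕ) {ν : ℕ} (x : Fin ν → ℝ) : Fin ν → ℝ := fun i =>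
  if hk : 0 < k then
    let grp : Fin k → ℝ := fun j =>
      if h : ((i : ℕ) / k) * k + (j : ℕ) < ν then x ⟨((i : ℕ) / k) * k + (j : ℕ), h⟩ else 0
    (grp ∘ Tuple.sort grp)
      ⟨k - 1 - (i : ℕ) % k, lt_of_le_of_lt (Nat.sub_le _ _) (Nat.sub_lt hk Nat.one_pos)⟩
  else x i

/-- Output of the hidden layers: `post x i` is the (activated) output of layer `i`. -/
noncomputable def GroupSortNet.post {k d : ℕ} (N : GroupSortNet k d) (x : Fin d → ℝ) :
    (i : ℕ) → Fin (N.width i) → ℝ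
  | 0 => fun j => x (Fin.cast N.width_in j)
  | i + 1 => groupSortFun k (N.V i *ᵥ N.post x i + N.c i)

/-- The real-valued function computed by the network (no activation after the last
affine layer). -/
noncomputable def GroupSortNet.eval {k d : ℕ} (N : GroupSortNet k d) (x : Fin d → ℝ) : ℝ :=
  (N.V (N.depth - 1) *ᵥ N.post x (N.depth - 1) + N.c (N.depth - 1))
    ⟨0, by
      have h : N.depth - 1 + 1 = N.depth := Nat.succ_pred_eq_of_pos N.depth_pos
      rw [h, N.width_out]
      exact Nat.one_pos⟩

/-- The size of the network: the sum of the widths of the hidden layers. -/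
def GroupSortNet.size {k d : ℕ} (N : GroupSortNet k d) : ℕ :=
  ∑ i ∈ Finset.Icc 1 (N.depth - 1), N.width i

/-- Assumption 1: `‖V₁‖_{2,∞} ≤ 1` (every row of `V₁` has Euclidean norm at most `1`),
`‖V_i‖_∞ ≤ 1` for `i = 2, …, q` (every row has `ℓ¹`-norm at most `1`), and all offsets
are bounded by some constant `K₂ ≥ 0`. -/
def GroupSortNet.Assumption1 {k d : ℕ} (N : GroupSortNet k d) : Prop :=
  (∀ r, ∑ j, (N.V 0 r j) ^ 2 ≤ 1) ∧
  (∀ i, 1 ≤ i → i < N.depth → ∀ r, ∑ j, |N.V i r j| ≤ 1) ∧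
  (∃ K₂ : ℝ, 0 ≤ K₂ ∧ ∀ i, i < N.depth → ∀ r, |N.c i r| ≤ K₂)

/-- A (possibly unbounded, possibly partly open) polyhedral set: a finite intersection of
(strict or non-strict) affine half-spaces. -/
def IsPolyhedralSet {d : ℕ} (S : Set (Fin d → ℝ)) : Prop :=
  ∃ (n : ℕ) (a : Fin n → Fin d → ℝ) (b : Fin n → ℝ) (strict : Fin n → Bool),
    S = {x | ∀ i, if strict i then ∑ j, a i j * x j < b i else ∑ j, a i j * x j ≤ b i}

/-- `f` is a continuous `m`-piecewise linear function on `ℝ^d` with pieces `Ω` and affine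
functions `x ↦ ⟨a i, x⟩ + b i`. -/
def IsPWLWith {d : ℕ} (f : (Fin d → ℝ) → ℝ) (m : ℕ)
    (Ω : Fin m → Set (Fin d → ℝ)) (a : Fin m → Fin d → ℝ) (b : Fin m → ℝ) : Prop :=
  Continuous f ∧
  (∀ i, IsPolyhedralSet (Ω i)) ∧
  (∀ i j, i ≠ j → Disjoint (Ω i) (Ω j)) ∧
  (⋃ i, Ω i) = Set.univ ∧
  (∀ i, ∀ x ∈ Ω i, f x = ∑ j, a i j * x j + b i)

/-- There is a partition of `ℝ^d` into `M` polyhedral sets, refining the partition `Ω`,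
on each of which no difference `ℓ_i - ℓ_j` of two affine pieces changes sign. -/
def IsSignRefinement {d : ℕ} (m : ℕ) (Ω : Fin m → Set (Fin d → ℝ))
    (a : Fin m → Fin d → ℝ) (b : Fin m → ℝ) (M : ℕ) : Prop :=
  ∃ Ω' : Fin M → Set (Fin d → ℝ),
    (∀ p, IsPolyhedralSet (Ω' p)) ∧
    (∀ p q, p ≠ q → Disjoint (Ω' p) (Ω' q)) ∧
    (⋃ p, Ω' p) = Set.univ ∧
    (∀ p, ∃ i, Ω' p ⊆ Ω i) ∧
    (∀ p : Fin M, ∀ i j : Fin m,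
      (∀ x ∈ Ω' p, ∑ t, a i t * x t + b i ≤ ∑ t, a j t * x t + b j) ∨
      (∀ x ∈ Ω' p, ∑ t, a j t * x t + b j ≤ ∑ t, a i t * x t + b i))

/-- `f : ℝ → ℝ` is a continuous `m`-piecewise linear function: `ℝ` is partitioned into
`m` intervals on the `i`-th of which `f x = a i * x + b i`. -/
def IsPWLRealWith (f : ℝ → ℝ) (m : ℕ) (I : Fin m → Set ℝ) (a b : Fin m → ℝ) : Prop :=
  Continuous f ∧
  (∀ i, (I i).OrdConnected) ∧
  (∀ i j, i ≠ j → Disjoint (I i) (I j)) ∧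
  (⋃ i, I i) = Set.univ ∧
  (∀ i, ∀ x ∈ I i, f x = a i * x + b i)

def IsPWLReal (f : ℝ → ℝ) (m : ℕ) : Prop :=
  ∃ I a b, IsPWLRealWith f m I a b


/-! ### Auxiliary machinery for the lower bound -/

section Aux

open Set

private lemma fin_two_cases : ∀ a : Fin 2, a = 0 ∨ a = 1 := by decide

lemma sort_two (g : Fin 2 → ℝ) :
    (g ∘ Tuple.sort g) 0 = min (g 0) (g 1) ∧ (g ∘ Tuple.sort g) 1 = max (g 0) (g 1) := by
  have hmono := Tuple.monotone_sort g
  have h01 : (g ∘ Tuple.sort g) 0 ≤ (g ∘ Tuple.sort g) 1 := hmono (by norm_num)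
  set σ := Tuple.sort g with hσ
  rcases fin_two_cases (σ 0) with h | h
  · have h1 : σ 1 = 1 := by
      rcases fin_two_cases (σ 1) with h' | h'
      · exact absurd (σ.injective (h'.trans h.symm)) (by norm_num)
      · exact h'
    simp only [Function.comp_apply, h, h1] at h01 ⊢
    exact ⟨(min_eq_left h01).symm, (max_eq_right h01).symm⟩
  · have h1 : σ 1 = 0 := by
      rcases fin_two_cases (σ 1) with h' | h'
      · exact h'
      · exact absurd (σ.injective (h'.trans h.symm)) (by norm_num)
    simp only [Function.comp_apply, h, h1] at h01 ⊢
    exact ⟨(min_eq_right h01).symm, (max_eq_left h01).symm⟩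

lemma groupSort_two {ν : ℕ} (x : Fin ν → ℝ) (i : Fin ν)
    (h0 : (i : ℕ) / 2 * 2 < ν) (h1 : (i : ℕ) / 2 * 2 + 1 < ν) :
    groupSortFun 2 x i =
      if (i : ℕ) % 2 = 0 then max (x ⟨(i:ℕ)/2*2, h0⟩) (x ⟨(i:ℕ)/2*2+1, h1⟩)
      else min (x ⟨(i:ℕ)/2*2, h0⟩) (x ⟨(i:ℕ)/2*2+1, h1⟩) := by
  set grp : Fin 2 → ℝ := fun j =>
    if h : (i : ℕ) / 2 * 2 + (j : ℕ) < ν then x ⟨(i : ℕ) / 2 * 2 + (j : ℕ), h⟩ else 0 with hgrp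
  have hmod : (i : ℕ) % 2 < 2 := Nat.mod_lt _ (by norm_num)
  have hrfl : groupSortFun 2 x i
      = (grp ∘ Tuple.sort grp) ⟨2 - 1 - (i : ℕ) % 2, by omega⟩ := rfl
  have hg0 : grp 0 = x ⟨(i:ℕ)/2*2, h0⟩ := by
    simp only [hgrp]
    rw [dif_pos (show (i:ℕ)/2*2 + ((0:Fin 2):ℕ) < ν by simpa using h0)]
    congr 1
  have hg1 : grp 1 = x ⟨(i:ℕ)/2*2+1, h1⟩ := by
    simp only [hgrp]
    rw [dif_pos (show (i:ℕ)/2*2 + ((1:Fin 2):ℕ) < ν by simpa using h1)]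
    congr 1
  rcases Nat.mod_two_eq_zero_or_one (i : ℕ) with hi | hi
  · have hidx : (⟨2 - 1 - (i : ℕ) % 2, by omega⟩ : Fin 2) = 1 := by
      ext; simp [hi]
    rw [hrfl, hidx, if_pos hi, (sort_two grp).2, hg0, hg1]
  · have hidx : (⟨2 - 1 - (i : ℕ) % 2, by omega⟩ : Fin 2) = 0 := by
      ext; simp [hi]
    rw [hrfl, hidx, if_neg (by omega), (sort_two grp).1, hg0, hg1]

/-- `g` is (coordinatewise) affine on `S`. -/
def AffV {ν : ℕ} (g : ℝ → (Fin ν → ℝ)) (S : Set ℝ) : Prop :=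
  ∃ a b : Fin ν → ℝ, ∀ x ∈ S, ∀ j, g x j = a j * x + b j

lemma AffV.mono {ν : ℕ} {g : ℝ → (Fin ν → ℝ)} {S T : Set ℝ} (h : AffV g S) (hTS : T ⊆ S) :
    AffV g T := by
  obtain ⟨a, b, hab⟩ := h
  exact ⟨a, b, fun x hx => hab x (hTS hx)⟩

lemma AffV.comp {ν μ : ℕ} {g : ℝ → (Fin ν → ℝ)} {S : Set ℝ}
    (V : Matrix (Fin μ) (Fin ν) ℝ) (c : Fin μ → ℝ) (h : AffV g S) :
    AffV (fun x => V *ᵥ g x + c) S := by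
  obtain ⟨a, b, hab⟩ := h
  refine ⟨fun r => ∑ j, V r j * a j, fun r => (∑ j, V r j * b j) + c r, fun x hx r => ?_⟩
  simp only [Pi.add_apply, Matrix.mulVec, dotProduct]
  have : ∀ j : Fin ν, V r j * g x j = V r j * a j * x + V r j * b j := by
    intro j; rw [hab x hx j]; ring
  rw [Finset.sum_congr rfl (fun j _ => this j), Finset.sum_add_distrib, ← Finset.sum_mul]
  ring

lemma ordConnected_nonneg_affine (α β : ℝ) : ({x : ℝ | 0 ≤ α * x + β}).OrdConnected := by
  constructor
  intro x hx y hy z hz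
  simp only [Set.mem_setOf_eq] at *
  rcases le_or_gt 0 α with h | h
  · nlinarith [hz.1, hz.2]
  · nlinarith [hz.1, hz.2]

lemma ordConnected_neg_affine (α β : ℝ) : ({x : ℝ | α * x + β < 0}).OrdConnected := by
  constructor
  intro x hx y hy z hz
  simp only [Set.mem_setOf_eq] at *
  rcases le_or_gt 0 α with h | h
  · nlinarith [hz.1, hz.2]
  · nlinarith [hz.1, hz.2]

/-- Refine a disjoint ord-connected family by one affine function, adding one piece. -/
lemma refine_one {p : ℕ} (T : Fin p → Set ℝ)
    (hoc : ∀ j, (T j).OrdConnected) (hdis : ∀ j j', j ≠ j' → Disjoint (T j) (T j'))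
    (α β : ℝ) :
    ∃ T' : Fin (p + 1) → Set ℝ,
      (∀ j, (T' j).OrdConnected) ∧ (∀ j j', j ≠ j' → Disjoint (T' j) (T' j')) ∧
      (⋃ j, T' j) = (⋃ j, T j) ∧
      (∀ j, T' j = ∅ ∨ ∃ j', T' j ⊆ T j') ∧
      (∀ j, (∀ x ∈ T' j, 0 ≤ α * x + β) ∨ (∀ x ∈ T' j, α * x + β ≤ 0)) := by
  classical
  set P : Set ℝ := {x | 0 ≤ α * x + β} with hPdef
  set Nn : Set ℝ := {x | α * x + β < 0} with hNdef
  have hPN : ∀ x : ℝ, x ∈ P ∨ x ∈ Nn := by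
    intro x
    rcases le_or_gt 0 (α * x + β) with h | h
    · exact Or.inl h
    · exact Or.inr h
  have hPNdis : ∀ x : ℝ, x ∈ P → x ∈ Nn → False := by
    intro x hP hN
    have h1 : 0 ≤ α * x + β := hP
    have h2 : α * x + β < 0 := hN
    linarith
  by_cases hex : ∃ j₀, (T j₀ ∩ P).Nonempty ∧ (T j₀ ∩ Nn).Nonempty
  · obtain ⟨j₀, ⟨x₁, hx₁T, hx₁P⟩, ⟨x₂, hx₂T, hx₂N⟩⟩ := hex
    have hroot : ∀ j, (T j ∩ P).Nonempty → (T j ∩ Nn).Nonempty → (-β / α) ∈ T j := by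
      rintro j ⟨u, huT, huP⟩ ⟨v, hvT, hvN⟩
      have h1 : 0 ≤ α * u + β := huP
      have h2 : α * v + β < 0 := hvN
      have hα : α ≠ 0 := by
        intro h
        rw [h] at h1 h2
        simp at h1 h2
        linarith
      have hmem : -β / α ∈ Set.uIcc u v := by
        rcases lt_or_gt_of_ne hα with h | h
        · have ha : u ≤ -β / α := by rw [le_div_iff_of_neg h]; nlinarith
          have hb : -β / α < v := by rw [div_lt_iff_of_neg h]; nlinarith
          exact Set.mem_uIcc.mpr (Or.inl ⟨ha, le_of_lt hb⟩)
        · have ha : -β / α ≤ u := by rw [div_le_iff₀ h]; nlinarith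
          have hb : v < -β / α := by rw [lt_div_iff₀ h]; nlinarith
          exact Set.mem_uIcc.mpr (Or.inr ⟨le_of_lt hb, ha⟩)
      exact (hoc j).uIcc_subset huT hvT hmem
    have hr₀ : (-β / α) ∈ T j₀ := hroot j₀ ⟨x₁, hx₁T, hx₁P⟩ ⟨x₂, hx₂T, hx₂N⟩
    have huniq : ∀ j, j ≠ j₀ → T j ⊆ P ∨ T j ⊆ Nn := by
      intro j hne
      by_contra hcon
      push_neg at hcon
      obtain ⟨h1, h2⟩ := hcon
      obtain ⟨u, huT, huP⟩ := Set.not_subset.mp h1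
      obtain ⟨v, hvT, hvN⟩ := Set.not_subset.mp h2
      have huN : u ∈ Nn := (hPN u).resolve_left huP
      have hvP : v ∈ P := by
        rcases hPN v with h | h
        · exact h
        · exact absurd h hvN
      have hr : (-β / α) ∈ T j := hroot j ⟨v, hvT, hvP⟩ ⟨u, huT, huN⟩
      exact Set.disjoint_left.mp (hdis j j₀ hne) hr hr₀
    set U : Fin p → Set ℝ := Function.update T j₀ (T j₀ ∩ P) with hUdef
    have hUsub : ∀ j, U j ⊆ T j := by
      intro j
      by_cases h : j = j₀
      · subst h; rw [hUdef, Function.update_self]; exact Set.inter_subset_left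
      · rw [hUdef, Function.update_of_ne h]
    refine ⟨Fin.snoc U (T j₀ ∩ Nn), ?_, ?_, ?_, ?_, ?_⟩
    · intro j
      rcases Fin.eq_castSucc_or_eq_last j with ⟨j, rfl⟩ | rfl
      · rw [Fin.snoc_castSucc]
        by_cases h : j = j₀
        · subst h
          rw [hUdef, Function.update_self]
          exact (hoc j).inter (ordConnected_nonneg_affine α β)
        · rw [hUdef, Function.update_of_ne h]
          exact hoc j
      · rw [Fin.snoc_last]
        exact (hoc j₀).inter (ordConnected_neg_affine α β)
    · intro j j' hne
      rcases Fin.eq_castSucc_or_eq_last j with ⟨j, rfl⟩ | rfl <;>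
        rcases Fin.eq_castSucc_or_eq_last j' with ⟨j', rfl⟩ | rfl
      · rw [Fin.snoc_castSucc, Fin.snoc_castSucc]
        have hjj' : j ≠ j' := fun h => hne (by rw [h])
        exact (hdis j j' hjj').mono (hUsub j) (hUsub j')
      · rw [Fin.snoc_castSucc, Fin.snoc_last]
        by_cases h : j = j₀
        · subst h
          rw [hUdef, Function.update_self]
          exact Set.disjoint_left.mpr fun x hx hx' => hPNdis x hx.2 hx'.2
        · rw [hUdef, Function.update_of_ne h]
          exact Set.disjoint_left.mpr fun x hx hx' =>
            Set.disjoint_left.mp (hdis j j₀ h) hx hx'.1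
      · rw [Fin.snoc_castSucc, Fin.snoc_last]
        by_cases h : j' = j₀
        · subst h
          rw [hUdef, Function.update_self]
          exact Set.disjoint_left.mpr fun x hx hx' => hPNdis x hx'.2 hx.2
        · rw [hUdef, Function.update_of_ne h]
          exact Set.disjoint_left.mpr fun x hx hx' =>
            Set.disjoint_left.mp (hdis j' j₀ h) hx' hx.1
      · exact absurd rfl hne
    · apply subset_antisymm
      · apply Set.iUnion_subset
        intro j
        rcases Fin.eq_castSucc_or_eq_last j with ⟨j, rfl⟩ | rfl
        · rw [Fin.snoc_castSucc]
          exact (hUsub j).trans (Set.subset_iUnion T j)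
        · rw [Fin.snoc_last]
          exact Set.inter_subset_left.trans (Set.subset_iUnion T j₀)
      · apply Set.iUnion_subset
        intro j x hx
        rw [Set.mem_iUnion]
        by_cases h : j = j₀
        · subst h
          rcases hPN x with hP | hN
          · exact ⟨Fin.castSucc j, by
              rw [Fin.snoc_castSucc, hUdef, Function.update_self]; exact ⟨hx, hP⟩⟩
          · exact ⟨Fin.last p, by rw [Fin.snoc_last]; exact ⟨hx, hN⟩⟩
        · exact ⟨Fin.castSucc j, by
            rw [Fin.snoc_castSucc, hUdef, Function.update_of_ne h]; exact hx⟩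
    · intro j
      rcases Fin.eq_castSucc_or_eq_last j with ⟨j, rfl⟩ | rfl
      · rw [Fin.snoc_castSucc]
        exact Or.inr ⟨j, hUsub j⟩
      · rw [Fin.snoc_last]
        exact Or.inr ⟨j₀, Set.inter_subset_left⟩
    · intro j
      rcases Fin.eq_castSucc_or_eq_last j with ⟨j, rfl⟩ | rfl
      · rw [Fin.snoc_castSucc]
        by_cases h : j = j₀
        · subst h
          rw [hUdef, Function.update_self]
          exact Or.inl fun x hx => hx.2
        · rw [hUdef, Function.update_of_ne h]
          rcases huniq j h with hsub | hsub
          · exact Or.inl fun x hx => hsub hx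
          · exact Or.inr fun x hx => le_of_lt (hsub hx)
      · rw [Fin.snoc_last]
        exact Or.inr fun x hx => le_of_lt hx.2
  · push_neg at hex
    refine ⟨Fin.snoc T ∅, ?_, ?_, ?_, ?_, ?_⟩
    · intro j
      rcases Fin.eq_castSucc_or_eq_last j with ⟨j, rfl⟩ | rfl
      · rw [Fin.snoc_castSucc]; exact hoc j
      · rw [Fin.snoc_last]; exact Set.ordConnected_empty
    · intro j j' hne
      rcases Fin.eq_castSucc_or_eq_last j with ⟨j, rfl⟩ | rfl <;>
        rcases Fin.eq_castSucc_or_eq_last j' with ⟨j', rfl⟩ | rfl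
      · rw [Fin.snoc_castSucc, Fin.snoc_castSucc]
        exact hdis j j' (fun h => hne (by rw [h]))
      · rw [Fin.snoc_last]
        exact Set.disjoint_right.mpr fun x hx => absurd hx (Set.notMem_empty x)
      · rw [Fin.snoc_last]
        exact Set.disjoint_left.mpr fun x hx => absurd hx (Set.notMem_empty x)
      · exact absurd rfl hne
    · apply subset_antisymm
      · apply Set.iUnion_subset
        intro j
        rcases Fin.eq_castSucc_or_eq_last j with ⟨j, rfl⟩ | rfl
        · rw [Fin.snoc_castSucc]; exact Set.subset_iUnion T j
        · rw [Fin.snoc_last]; exact Set.empty_subset _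
      · apply Set.iUnion_subset
        intro j x hx
        rw [Set.mem_iUnion]
        refine ⟨Fin.castSucc j, ?_⟩
        rw [Fin.snoc_castSucc]
        exact hx
    · intro j
      rcases Fin.eq_castSucc_or_eq_last j with ⟨j, rfl⟩ | rfl
      · rw [Fin.snoc_castSucc]; exact Or.inr ⟨j, le_refl _⟩
      · rw [Fin.snoc_last]; exact Or.inl rfl
    · intro j
      rcases Fin.eq_castSucc_or_eq_last j with ⟨j, rfl⟩ | rfl
      · rw [Fin.snoc_castSucc]
        by_cases hP : T j ⊆ P
        · exact Or.inl fun x hx => hP hx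
        · refine Or.inr fun x hx => le_of_lt ?_
          rcases hPN x with h | h
          · exfalso
            obtain ⟨y, hyT, hyP⟩ := Set.not_subset.mp hP
            have hyN : y ∈ Nn := (hPN y).resolve_left hyP
            exact Set.eq_empty_iff_forall_notMem.mp (hex j ⟨x, hx, h⟩) y ⟨hyT, hyN⟩
          · exact h
      · rw [Fin.snoc_last]
        exact Or.inl fun x hx => absurd hx (Set.notMem_empty x)

lemma refine_many {p : ℕ} (T : Fin p → Set ℝ)
    (hoc : ∀ j, (T j).OrdConnected) (hdis : ∀ j j', j ≠ j' → Disjoint (T j) (T j')) :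
    ∀ (G : ℕ) (α β : Fin G → ℝ),
    ∃ T' : Fin (p + G) → Set ℝ,
      (∀ j, (T' j).OrdConnected) ∧ (∀ j j', j ≠ j' → Disjoint (T' j) (T' j')) ∧
      (⋃ j, T' j) = (⋃ j, T j) ∧
      (∀ j, T' j = ∅ ∨ ∃ j', T' j ⊆ T j') ∧
      (∀ j t, (∀ x ∈ T' j, 0 ≤ α t * x + β t) ∨ (∀ x ∈ T' j, α t * x + β t ≤ 0)) := by
  intro G
  induction G with
  | zero =>
    intro α β
    exact ⟨T, hoc, hdis, rfl, fun j => Or.inr ⟨j, le_refl _⟩, fun j t => t.elim0⟩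
  | succ G ih =>
    intro α β
    obtain ⟨T₁, h1, h2, h3, h4, h5⟩ := ih (fun t => α t.castSucc) (fun t => β t.castSucc)
    obtain ⟨T', g1, g2, g3, g4, g5⟩ := refine_one T₁ h1 h2 (α (Fin.last G)) (β (Fin.last G))
    refine ⟨T', g1, g2, g3.trans h3, ?_, ?_⟩
    · intro j
      rcases g4 j with h | ⟨j', hsub⟩
      · exact Or.inl h
      · rcases h4 j' with h | ⟨j'', hsub'⟩
        · exact Or.inl (Set.eq_empty_of_subset_empty (h ▸ hsub))
        · exact Or.inr ⟨j'', hsub.trans hsub'⟩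
    · intro j t
      rcases Fin.eq_castSucc_or_eq_last t with ⟨t, rfl⟩ | rfl
      · rcases g4 j with h | ⟨j', hsub⟩
        · exact Or.inl fun x hx => absurd (h ▸ hx) (Set.notMem_empty x)
        · rcases h5 j' t with hs | hs
          · exact Or.inl fun x hx => hs x (hsub hx)
          · exact Or.inr fun x hx => hs x (hsub hx)
      · exact g5 j

lemma piece_groupSort {ν : ℕ} (hν : 2 ∣ ν) {g : ℝ → Fin ν → ℝ} {S : Set ℝ}
    (hS : S.OrdConnected) (hg : AffV g S) :
    ∃ T : Fin (1 + ν / 2) → Set ℝ,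
      (∀ j, (T j).OrdConnected) ∧ (∀ j j', j ≠ j' → Disjoint (T j) (T j')) ∧
      (⋃ j, T j) = S ∧ (∀ j, AffV (fun x => groupSortFun 2 (g x)) (T j)) := by
  obtain ⟨a, b, hab⟩ := hg
  have hlt : ∀ t : Fin (ν / 2), (t : ℕ) * 2 < ν ∧ (t : ℕ) * 2 + 1 < ν := by
    intro t
    obtain ⟨s, rfl⟩ := hν
    have := t.2
    omega
  obtain ⟨T, h1, h2, h3, h4, h5⟩ :=
    refine_many (fun _ : Fin 1 => S) (fun _ => hS)
      (fun j j' hne => absurd (Subsingleton.elim j j') hne) (ν / 2)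
      (fun t => a ⟨(t : ℕ) * 2, (hlt t).1⟩ - a ⟨(t : ℕ) * 2 + 1, (hlt t).2⟩)
      (fun t => b ⟨(t : ℕ) * 2, (hlt t).1⟩ - b ⟨(t : ℕ) * 2 + 1, (hlt t).2⟩)
  refine ⟨T, h1, h2, by rw [h3]; exact Set.iUnion_const S, ?_⟩
  intro j
  have hTS : T j ⊆ S := by
    rcases h4 j with h | ⟨j', h⟩
    · rw [h]; exact Set.empty_subset S
    · exact h
  have key : ∀ i : Fin ν, ∃ A B : ℝ, ∀ x ∈ T j, groupSortFun 2 (g x) i = A * x + B := by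
    intro i
    have hi2 := i.2
    obtain ⟨s, hs2⟩ := hν
    have h0 : (i : ℕ) / 2 * 2 < ν := by omega
    have h1' : (i : ℕ) / 2 * 2 + 1 < ν := by omega
    have ht : (i : ℕ) / 2 < ν / 2 := by omega
    have hsign := h5 j ⟨(i : ℕ) / 2, ht⟩
    have hδ : ∀ x : ℝ,
        (a ⟨(i:ℕ)/2*2, h0⟩ - a ⟨(i:ℕ)/2*2+1, h1'⟩) * x
          + (b ⟨(i:ℕ)/2*2, h0⟩ - b ⟨(i:ℕ)/2*2+1, h1'⟩)
        = (a ⟨((⟨(i:ℕ)/2, ht⟩ : Fin (ν/2)) : ℕ) * 2, (hlt ⟨(i:ℕ)/2, ht⟩).1⟩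
            - a ⟨((⟨(i:ℕ)/2, ht⟩ : Fin (ν/2)) : ℕ) * 2 + 1, (hlt ⟨(i:ℕ)/2, ht⟩).2⟩) * x
          + (b ⟨((⟨(i:ℕ)/2, ht⟩ : Fin (ν/2)) : ℕ) * 2, (hlt ⟨(i:ℕ)/2, ht⟩).1⟩
            - b ⟨((⟨(i:ℕ)/2, ht⟩ : Fin (ν/2)) : ℕ) * 2 + 1, (hlt ⟨(i:ℕ)/2, ht⟩).2⟩) := by
      intro x; rfl
    rcases hsign with hsgn | hsgn
    · refine ⟨if (i:ℕ) % 2 = 0 then a ⟨(i:ℕ)/2*2, h0⟩ else a ⟨(i:ℕ)/2*2+1, h1'⟩,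
              if (i:ℕ) % 2 = 0 then b ⟨(i:ℕ)/2*2, h0⟩ else b ⟨(i:ℕ)/2*2+1, h1'⟩, ?_⟩
      intro x hx
      have hd : 0 ≤ (a ⟨(i:ℕ)/2*2, h0⟩ - a ⟨(i:ℕ)/2*2+1, h1'⟩) * x
          + (b ⟨(i:ℕ)/2*2, h0⟩ - b ⟨(i:ℕ)/2*2+1, h1'⟩) := by
        rw [hδ x]; exact hsgn x hx
      have hx0 := hab x (hTS hx) ⟨(i:ℕ)/2*2, h0⟩
      have hx1 := hab x (hTS hx) ⟨(i:ℕ)/2*2+1, h1'⟩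
      have hle : g x ⟨(i:ℕ)/2*2+1, h1'⟩ ≤ g x ⟨(i:ℕ)/2*2, h0⟩ := by
        rw [hx0, hx1]; nlinarith [hd]
      rw [groupSort_two (g x) i h0 h1']
      by_cases hpar : (i:ℕ) % 2 = 0
      · rw [if_pos hpar, if_pos hpar, if_pos hpar, max_eq_left hle, hx0]
      · rw [if_neg hpar, if_neg hpar, if_neg hpar, min_eq_right hle, hx1]
    · refine ⟨if (i:ℕ) % 2 = 0 then a ⟨(i:ℕ)/2*2+1, h1'⟩ else a ⟨(i:ℕ)/2*2, h0⟩,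
              if (i:ℕ) % 2 = 0 then b ⟨(i:ℕ)/2*2+1, h1'⟩ else b ⟨(i:ℕ)/2*2, h0⟩, ?_⟩
      intro x hx
      have hd : (a ⟨(i:ℕ)/2*2, h0⟩ - a ⟨(i:ℕ)/2*2+1, h1'⟩) * x
          + (b ⟨(i:ℕ)/2*2, h0⟩ - b ⟨(i:ℕ)/2*2+1, h1'⟩) ≤ 0 := by
        rw [hδ x]; exact hsgn x hx
      have hx0 := hab x (hTS hx) ⟨(i:ℕ)/2*2, h0⟩
      have hx1 := hab x (hTS hx) ⟨(i:ℕ)/2*2+1, h1'⟩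
      have hle : g x ⟨(i:ℕ)/2*2, h0⟩ ≤ g x ⟨(i:ℕ)/2*2+1, h1'⟩ := by
        rw [hx0, hx1]; nlinarith [hd]
      rw [groupSort_two (g x) i h0 h1']
      by_cases hpar : (i:ℕ) % 2 = 0
      · rw [if_pos hpar, if_pos hpar, if_pos hpar, max_eq_right hle, hx1]
      · rw [if_neg hpar, if_neg hpar, if_neg hpar, min_eq_left hle, hx0]
  choose A B hAB using key
  exact ⟨A, B, fun x hx i => hAB i x hx⟩

lemma net_invariant (N : GroupSortNet 2 1) (i : ℕ) (hi : i ≤ N.depth - 1) :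
    ∃ (p : ℕ) (I : Fin p → Set ℝ),
      (∀ j, (I j).OrdConnected) ∧ (∀ j j', j ≠ j' → Disjoint (I j) (I j')) ∧
      (⋃ j, I j) = Set.univ ∧
      (∀ j, AffV (fun x => N.post (fun _ => x) i) (I j)) ∧
      p ≤ ∏ t ∈ Finset.Icc 1 i, (N.width t / 2 + 1) := by
  induction i with
  | zero =>
    refine ⟨1, fun _ => Set.univ, fun _ => Set.ordConnected_univ,
      fun j j' h => absurd (Subsingleton.elim j j') h, Set.iUnion_const _, ?_, by simp⟩
    intro j
    refine ⟨fun _ => 1, fun _ => 0, fun x _ t => ?_⟩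
    show x = 1 * x + 0
    ring
  | succ i ih =>
    have hi' : i ≤ N.depth - 1 := by omega
    obtain ⟨p, I, hoc, hdis, huniv, haff, hcount⟩ := ih hi'
    have hν : 2 ∣ N.width (i + 1) := N.width_div (i + 1) (by omega) hi
    have haff' : ∀ j, AffV (fun x => N.V i *ᵥ N.post (fun _ => x) i + N.c i) (I j) :=
      fun j => (haff j).comp (N.V i) (N.c i)
    have key := fun j : Fin p => piece_groupSort hν (hoc j) (haff' j)
    choose T hT1 hT2 hT3 hT4 using key
    have hTsub : ∀ j s, T j s ⊆ I j := fun j s => (hT3 j) ▸ Set.subset_iUnion (T j) s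
    refine ⟨p * (1 + N.width (i + 1) / 2),
      fun k => T (finProdFinEquiv.symm k).1 (finProdFinEquiv.symm k).2,
      fun k => hT1 _ _, ?_, ?_, ?_, ?_⟩
    · intro k k' hne
      have hkk : finProdFinEquiv.symm k ≠ finProdFinEquiv.symm k' :=
        finProdFinEquiv.symm.injective.ne hne
      by_cases h : (finProdFinEquiv.symm k).1 = (finProdFinEquiv.symm k').1
      · have hss : (finProdFinEquiv.symm k).2 ≠ (finProdFinEquiv.symm k').2 := by
          intro h2
          exact hkk (Prod.ext h h2)
        show Disjoint (T (finProdFinEquiv.symm k).1 (finProdFinEquiv.symm k).2)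
            (T (finProdFinEquiv.symm k').1 (finProdFinEquiv.symm k').2)
        rw [h]
        exact hT2 _ _ _ hss
      · exact ((hdis _ _ h).mono (hTsub _ _) (hTsub _ _))

    · apply subset_antisymm (Set.subset_univ _)
      intro x _
      have hx : x ∈ ⋃ j, I j := by rw [huniv]; trivial
      obtain ⟨j, hj⟩ := Set.mem_iUnion.mp hx
      rw [← hT3 j] at hj
      obtain ⟨s, hs⟩ := Set.mem_iUnion.mp hj
      rw [Set.mem_iUnion]
      exact ⟨finProdFinEquiv (j, s), by rw [Equiv.symm_apply_apply]; exact hs⟩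
    · intro k
      exact hT4 (finProdFinEquiv.symm k).1 (finProdFinEquiv.symm k).2
    · rw [Finset.prod_Icc_succ_top (by omega : 1 ≤ i + 1)]
      exact Nat.mul_le_mul hcount (by omega)

lemma eval_const_of_zero_width (N : GroupSortNet 2 1) (j : ℕ) (hj1 : 1 ≤ j)
    (hj : j ≤ N.depth - 1) (h0 : N.width j = 0) (x y : Fin 1 → ℝ) : N.eval x = N.eval y := by
  have hpost : ∀ i, j ≤ i → N.post x i = N.post y i := by
    intro i hji
    induction i with
    | zero => omega
    | succ i ih =>
      rcases Nat.lt_or_ge j (i + 1) with h | h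
      · have hij : j ≤ i := by omega
        show groupSortFun 2 (N.V i *ᵥ N.post x i + N.c i) = _
        rw [ih hij]
        rfl
      · have hji' : j = i + 1 := by omega
        subst hji'
        funext t
        exact absurd t.2 (by omega)
  simp only [GroupSortNet.eval]
  rw [hpost (N.depth - 1) hj]

end Aux

/-- Depth/size trade-off: if `f : ℝ → ℝ` is `1`-Lipschitz and `m`-piecewise linear
(with `m` minimal), then any GroupSort network of grouping size `2` satisfying
Assumption 1 that represents `f` with depth `q` has size at least
`(1/2)(q-1) m^(1/(q-1))`. -/
theorem groupSortNet_size_lower_bound (f : ℝ → ℝ) (hlip : LipschitzWith 1 f)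
    (m : ℕ) (hm : 2 ≤ m) (hf : IsPWLReal f m) (hmin : ∀ m' : ℕ, m' < m → ¬ IsPWLReal f m')
    (N : GroupSortNet 2 1) (hA : N.Assumption1)
    (hrep : ∀ x : ℝ, N.eval (fun _ => x) = f x) :
    (1 / 2 : ℝ) * ((N.depth : ℝ) - 1) * (m : ℝ) ^ ((1 : ℝ) / ((N.depth : ℝ) - 1))
      ≤ (N.size : ℝ) := by
  classical
  by_cases hq1 : N.depth = 1
  · rw [hq1]
    norm_num
  · have hq2 : 2 ≤ N.depth := by have := N.depth_pos; omega
    by_cases hzero : ∃ j, 1 ≤ j ∧ j ≤ N.depth - 1 ∧ N.width j = 0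
    · -- a zero-width hidden layer makes `f` constant, contradicting `2 ≤ m`
      obtain ⟨j, hj1, hj2, hj0⟩ := hzero
      have hconst : ∀ x : ℝ, f x = f 0 := by
        intro x
        rw [← hrep x, ← hrep 0]
        exact eval_const_of_zero_width N j hj1 hj2 hj0 _ _
      have hpwl1 : IsPWLReal f 1 := by
        refine ⟨fun _ => Set.univ, fun _ => 0, fun _ => f 0, hlip.continuous,
          fun _ => Set.ordConnected_univ,
          fun i j hij => absurd (Subsingleton.elim i j) hij,
          Set.iUnion_const _, fun i x _ => ?_⟩
        rw [hconst x]
        ring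
      exact absurd hpwl1 (hmin 1 (by omega))
    · push_neg at hzero
      have hw2 : ∀ t ∈ Finset.Icc 1 (N.depth - 1), 2 ≤ N.width t := by
        intro t ht
        rw [Finset.mem_Icc] at ht
        have h1 := N.width_div t ht.1 ht.2
        have h2 := hzero t ht.1 ht.2
        omega
      obtain ⟨p, I, hoc, hdis, huniv, haff, hcount⟩ :=
        net_invariant N (N.depth - 1) (le_refl _)
      -- f is affine on each piece
      have i0lt : 0 < N.width (N.depth - 1 + 1) := by
        have h : N.depth - 1 + 1 = N.depth := Nat.succ_pred_eq_of_pos N.depth_pos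
        rw [h, N.width_out]
        exact Nat.one_pos
      have haff' : ∀ j, ∃ A B : ℝ, ∀ x ∈ I j, f x = A * x + B := by
        intro j
        obtain ⟨a, b, hab⟩ := (haff j).comp (N.V (N.depth - 1)) (N.c (N.depth - 1))
        refine ⟨a ⟨0, i0lt⟩, b ⟨0, i0lt⟩, fun x hx => ?_⟩
        rw [← hrep x]
        exact hab x hx ⟨0, i0lt⟩
      choose A B hAB using haff'
      have hpwl : IsPWLReal f p :=
        ⟨I, A, B, hlip.continuous, hoc, hdis, huniv, fun i x hx => hAB i x hx⟩
      have hmp : m ≤ p := by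
        by_contra h
        push_neg at h
        exact hmin p h hpwl
      have hP : p ≤ ∏ t ∈ Finset.Icc 1 (N.depth - 1), N.width t := by
        refine hcount.trans (Finset.prod_le_prod' ?_)
        intro t ht
        have h1 := hw2 t ht
        rw [Finset.mem_Icc] at ht
        have h2 := N.width_div t ht.1 ht.2
        omega
      -- arithmetic finish
      set n : ℕ := N.depth - 1 with hn
      set s : Finset ℕ := Finset.Icc 1 n with hs
      have hn1 : 1 ≤ n := by omega
      have hcard : s.card = n := by rw [hs, Nat.card_Icc]; omega
      have hnR : ((N.depth : ℝ) - 1) = (n : ℝ) := by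
        rw [hn, Nat.cast_sub N.depth_pos, Nat.cast_one]
      have hnpos : (0 : ℝ) < (n : ℝ) := by exact_mod_cast hn1
      rw [hnR]
      have hgm := Real.geom_mean_le_arith_mean_weighted s (fun _ => 1 / (n : ℝ))
        (fun t => (N.width t : ℝ)) (fun i _ => by positivity)
        (by rw [Finset.sum_const, hcard, nsmul_eq_mul]; field_simp)
        (fun i _ => by positivity)
      have hprod : ((∏ t ∈ s, N.width t : ℕ) : ℝ) ^ ((1 : ℝ) / (n : ℝ))
          = ∏ t ∈ s, ((N.width t : ℝ)) ^ ((1 : ℝ) / (n : ℝ)) := by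
        rw [Nat.cast_prod]
        rw [Real.finset_prod_rpow s _ (fun i _ => by positivity)]
      have hm1 : (m : ℝ) ^ ((1 : ℝ) / (n : ℝ))
          ≤ ((∏ t ∈ s, N.width t : ℕ) : ℝ) ^ ((1 : ℝ) / (n : ℝ)) := by
        apply Real.rpow_le_rpow (by positivity) ?_ (by positivity)
        exact_mod_cast hmp.trans hP
      have hsum : ∑ t ∈ s, (1 / (n : ℝ)) * (N.width t : ℝ)
          = (1 / (n : ℝ)) * ∑ t ∈ s, (N.width t : ℝ) := by
        rw [Finset.mul_sum]
      have hsize : (N.size : ℝ) = ∑ t ∈ s, (N.width t : ℝ) := by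
        rw [GroupSortNet.size, Nat.cast_sum]
      have hchain : (m : ℝ) ^ ((1 : ℝ) / (n : ℝ))
          ≤ (1 / (n : ℝ)) * (N.size : ℝ) := by
        rw [hsize, ← hsum]
        exact hm1.trans (hprod ▸ hgm)
      have hsize0 : (0 : ℝ) ≤ (N.size : ℝ) := by positivity
      calc (1 / 2 : ℝ) * (n : ℝ) * (m : ℝ) ^ ((1 : ℝ) / (n : ℝ))
          ≤ (1 / 2 : ℝ) * (n : ℝ) * ((1 / (n : ℝ)) * (N.size : ℝ)) := by
            apply mul_le_mul_of_nonneg_left hchain (by positivity)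
        _ = (N.size : ℝ) / 2 := by field_simp
        _ ≤ (N.size : ℝ) := by linarith
end

section
/- Let ε > 0 and f : [0,1] → ℝ be 1-Lipschitz and convex (or concave). Then there exists a GroupSort neural network D of grouping size 2 satisfying Assumption 1 with sup_{x ∈ [0,1]} |f(x) − D(x)| ≤ ε, whose depth is ⌈log₂(1/ε)⌉ + 1 and whose size is at most 2·2^{⌈log₂(1/ε)⌉} − 1 (in particular O(1/ε)). -/
open Matrix

private lemma fin2cases (a : Fin 2) : a = 0 ∨ a = 1 := by
  have := a.isLt
  rcases (by omega : (a : ℕ) = 0 ∨ (a : ℕ) = 1) with h | h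
  · left; exact Fin.ext h
  · right; exact Fin.ext h

lemma sort_two_max (h : Fin 2 → ℝ) : (h ∘ Tuple.sort h) 1 = max (h 0) (h 1) := by
  have mono := Tuple.monotone_sort h
  have h01 : (h ∘ Tuple.sort h) 0 ≤ (h ∘ Tuple.sort h) 1 := mono (by norm_num)
  set e := Tuple.sort h with he
  rcases fin2cases (e 1) with h1 | h1
  · have h0 : e 0 = 1 := by
      rcases fin2cases (e 0) with h' | h'
      · exfalso; have : e 0 = e 1 := by rw [h1, h']
        have := e.injective this; simp at this
      · exact h'
    simp only [Function.comp_apply, h1, h0] at *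
    exact (max_eq_left h01).symm
  · have h0 : e 0 = 0 := by
      rcases fin2cases (e 0) with h' | h'
      · exact h'
      · exfalso; have : e 0 = e 1 := by rw [h1, h']
        have := e.injective this; simp at this
    simp only [Function.comp_apply, h1, h0] at *
    exact (max_eq_right h01).symm

lemma groupSort2_even {ν : ℕ} (x : Fin ν → ℝ) (m : ℕ) (h1 : 2 * m + 1 < ν) :
    groupSortFun 2 x ⟨2 * m, by omega⟩ = max (x ⟨2 * m, by omega⟩) (x ⟨2 * m + 1, h1⟩) := by
  have hdiv : (2 * m) / 2 = m := by omega
  have hmod : (2 * m) % 2 = 0 := by omega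
  unfold groupSortFun
  rw [dif_pos Nat.zero_lt_two]
  simp only [hdiv, hmod]
  set grp : Fin 2 → ℝ := fun j =>
      if h : m * 2 + (j : ℕ) < ν then x ⟨m * 2 + (j : ℕ), h⟩ else 0 with hgrp
  have g0 : grp 0 = x ⟨2 * m, by omega⟩ := by
    rw [hgrp]; simp only []
    rw [dif_pos (by omega : m * 2 + ((0 : Fin 2) : ℕ) < ν)]
    congr 1; simp; omega
  have g1 : grp 1 = x ⟨2 * m + 1, h1⟩ := by
    rw [hgrp]; simp only []
    rw [dif_pos (by omega : m * 2 + ((1 : Fin 2) : ℕ) < ν)]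
    congr 1; simp; omega
  have : (⟨2 - 1 - 0, by omega⟩ : Fin 2) = 1 := by rfl
  rw [this, ← g0, ← g1]
  exact sort_two_max grp
/-- Sum of a "selector row" times a vector. -/
lemma sum_pick {ν : ℕ} (v : Fin ν → ℝ) (s : ℝ) (p : ℕ) (hp : p < ν) :
    ∑ j : Fin ν, (if (j : ℕ) = p then s else 0) * v j = s * v ⟨p, hp⟩ := by
  rw [Finset.sum_eq_single (⟨p, hp⟩ : Fin ν)]
  · simp
  · intro b _ hb
    rw [if_neg, zero_mul]
    intro hcon; exact hb (Fin.ext hcon)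
  · intro h; exact absurd (Finset.mem_univ _) h

lemma sum_pick_abs {ν : ℕ} (s : ℝ) (p : ℕ) (hp : p < ν) :
    ∑ j : Fin ν, |if (j : ℕ) = p then s else 0| = |s| := by
  rw [Finset.sum_eq_single (⟨p, hp⟩ : Fin ν)]
  · simp
  · intro b _ hb
    rw [if_neg, abs_zero]
    intro hcon; exact hb (Fin.ext hcon)
  · intro h; exact absurd (Finset.mem_univ _) h

/-- The binary max-tree GroupSort network computing `s * max_{j < 2^n} (a j * x + b j)`. -/
noncomputable def maxNet (n : ℕ) (hn : 1 ≤ n) (a b : ℕ → ℝ) (s : ℝ) : GroupSortNet 2 1 where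
  depth := n + 1
  depth_pos := by omega
  width := fun i => if 1 ≤ i ∧ i ≤ n then 2 ^ (n + 1 - i) else 1
  width_in := by simp
  width_out := by simp
  width_div := by
    intro i h1 h2
    simp only [Nat.add_sub_cancel] at h2
    show 2 ∣ if 1 ≤ i ∧ i ≤ n then 2 ^ (n + 1 - i) else 1
    rw [if_pos ⟨h1, h2⟩]
    exact dvd_pow_self 2 (by omega)
  V := fun i r j =>
    if i = 0 then a (r : ℕ)
    else if i = n then (if (j : ℕ) = 0 then s else 0)
    else if (j : ℕ) = 2 * (r : ℕ) then 1 else 0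
  c := fun i r => if i = 0 then b (r : ℕ) else 0

lemma maxNet_width (n : ℕ) (hn : 1 ≤ n) (a b : ℕ → ℝ) (s : ℝ) (i : ℕ) (h1 : 1 ≤ i)
    (h2 : i ≤ n) : (maxNet n hn a b s).width i = 2 ^ (n + 1 - i) := if_pos ⟨h1, h2⟩
noncomputable def maxL (a b : ℕ → ℝ) (x : ℝ) (i m : ℕ) : ℝ :=
  (Finset.range (2 ^ i)).sup' (Finset.nonempty_range_iff.mpr (by positivity))
    (fun t => a (2 ^ i * m + t) * x + b (2 ^ i * m + t))

lemma maxL_zero (a b : ℕ → ℝ) (x : ℝ) (m : ℕ) : maxL a b x 0 m = a m * x + b m := by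
  unfold maxL
  simp

lemma maxL_succ (a b : ℕ → ℝ) (x : ℝ) (i m : ℕ) :
    maxL a b x (i + 1) m = max (maxL a b x i (2 * m)) (maxL a b x i (2 * m + 1)) := by
  unfold maxL
  have hr : Finset.range (2 ^ (i + 1)) =
      Finset.range (2 ^ i) ∪ (Finset.range (2 ^ i)).map (addLeftEmbedding (2 ^ i)) := by
    rw [← Finset.range_add]; congr 1; ring
  have hne : (Finset.range (2 ^ i)).Nonempty := Finset.nonempty_range_iff.mpr (by positivity)
  rw [Finset.sup'_congr _ hr (fun t _ => rfl), Finset.sup'_union hne (by rwa [Finset.map_nonempty]), Finset.sup'_map]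
  congr 1
  · apply Finset.sup'_congr _ rfl
    intro t ht
    have : 2 ^ (i + 1) * m + t = 2 ^ i * (2 * m) + t := by ring
    rw [this]
  · apply Finset.sup'_congr _ rfl
    intro t ht
    simp only [Function.comp_apply, addLeftEmbedding_apply]
    have : 2 ^ (i + 1) * m + (2 ^ i + t) = 2 ^ i * (2 * m + 1) + t := by ring
    rw [this]
lemma maxNet_post (n : ℕ) (hn : 1 ≤ n) (a b : ℕ → ℝ) (s : ℝ) (x : Fin 1 → ℝ) :
    ∀ i, 1 ≤ i → i ≤ n → ∀ m (hm : 2 * m < (maxNet n hn a b s).width i),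
      (maxNet n hn a b s).post x i ⟨2 * m, hm⟩ = maxL a b (x 0) i m := by
  set N := maxNet n hn a b s with hN
  intro i
  induction i with
  | zero => omega
  | succ i ih =>
    intro _ hle m hm
    -- the input vector to the groupSort of layer i+1
    have hpost : N.post x (i + 1) = groupSortFun 2 (N.V i *ᵥ N.post x i + N.c i) := rfl
    have hwsucc : N.width (i + 1) = 2 ^ (n - i) := by
      have := maxNet_width n hn a b s (i + 1) (by omega) (by omega)
      rw [← hN] at this; rw [this]; congr 1; omega
    have hm1 : 2 * m + 1 < N.width (i + 1) := by
      rw [hwsucc] at hm ⊢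
      have : 2 ∣ 2 ^ (n - i) := dvd_pow_self 2 (by omega)
      omega
    rcases Nat.eq_or_lt_of_le (by omega : 1 ≤ i + 1) with h1 | h1
    · -- base case : i = 0
      have hi0 : i = 0 := by omega
      subst hi0
      have hy : ∀ r : Fin (N.width 1), (N.V 0 *ᵥ N.post x 0 + N.c 0) r
          = a (r : ℕ) * x 0 + b (r : ℕ) := by
        intro r
        have : (N.V 0 *ᵥ N.post x 0) r = ∑ j : Fin (N.width 0), a (r : ℕ) * N.post x 0 j := by
          simp only [Matrix.mulVec, dotProduct]
          exact Finset.sum_congr rfl fun j _ => rfl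
        simp only [Pi.add_apply, this]
        have hx0 : ∀ j : Fin (N.width 0), N.post x 0 j = x 0 := by
          intro j; show x (Fin.cast N.width_in j) = x 0; congr 1
          apply Subsingleton.elim
        rw [Finset.sum_congr rfl (fun j _ => by rw [hx0 j])]
        rw [Finset.sum_const, Finset.card_univ, Fintype.card_fin]
        have : N.width 0 = 1 := N.width_in
        rw [this, one_smul]
        show a (r : ℕ) * x 0 + b (r : ℕ) = _
        rfl
      rw [hpost, groupSort2_even _ m hm1, hy, hy]
      rw [maxL_succ, maxL_zero, maxL_zero]
    · -- inductive step : 1 ≤ i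
      have hwi : N.width i = 2 ^ (n + 1 - i) := maxNet_width n hn a b s i (by omega) (by omega)
      have hy : ∀ r : Fin (N.width (i + 1)), (N.V i *ᵥ N.post x i + N.c i) r
          = maxL a b (x 0) i (r : ℕ) := by
        intro r
        have hr2 : 2 * (r : ℕ) < N.width i := by
          have h1' : (r : ℕ) < 2 ^ (n - i) := lt_of_lt_of_eq r.isLt hwsucc
          have h2' : 2 * 2 ^ (n - i) = 2 ^ (n + 1 - i) := by
            rw [← pow_succ']; congr 1; omega
          have h3' : 2 * (r : ℕ) < 2 ^ (n + 1 - i) := by omega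
          exact lt_of_lt_of_eq h3' hwi.symm
        have hVij : ∀ j : Fin (N.width i), N.V i r j
            = if (j : ℕ) = 2 * (r : ℕ) then (1 : ℝ) else 0 := by
          intro j
          show (if i = 0 then a (r : ℕ) else if i = n then (if (j : ℕ) = 0 then s else 0)
            else if (j : ℕ) = 2 * (r : ℕ) then (1:ℝ) else 0) = _
          rw [if_neg (by omega), if_neg (by omega)]
        have : (N.V i *ᵥ N.post x i) r
            = ∑ j : Fin (N.width i), (if (j : ℕ) = 2 * (r : ℕ) then (1:ℝ) else 0)
                * N.post x i j := by
          simp only [Matrix.mulVec, dotProduct]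
          exact Finset.sum_congr rfl fun j _ => by rw [hVij j]
        simp only [Pi.add_apply, this]
        rw [sum_pick _ 1 _ hr2, one_mul]
        have hc : N.c i r = 0 := by
          show (if i = 0 then b (r : ℕ) else 0) = 0
          rw [if_neg (by omega)]
        rw [hc, add_zero, ih (by omega) (by omega) (r : ℕ) hr2]
      rw [hpost, groupSort2_even _ m hm1, hy, hy]
      have e1 : ((⟨2 * m, hm⟩ : Fin (N.width (i+1))) : ℕ) = 2 * m := rfl
      have e2 : ((⟨2 * m + 1, hm1⟩ : Fin (N.width (i+1))) : ℕ) = 2 * m + 1 := rfl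
      rw [e1, e2, maxL_succ]
lemma maxNet_eval (n : ℕ) (hn : 1 ≤ n) (a b : ℕ → ℝ) (s : ℝ) (x : Fin 1 → ℝ) :
    (maxNet n hn a b s).eval x = s * maxL a b (x 0) n 0 := by
  set N := maxNet n hn a b s with hN
  have hwn : N.width n = 2 := by
    have h2 := maxNet_width n hn a b s n hn le_rfl
    rw [← hN] at h2; rw [h2]
    have : n + 1 - n = 1 := by omega
    rw [this, pow_one]
  have h0 : (0 : ℕ) < N.width n := by omega
  have hw1 : N.width (n + 1) = 1 := if_neg (by omega)
  have hlt : (0 : ℕ) < N.width (n + 1) := by omega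
  have hVn : ∀ (r : Fin (N.width (n + 1))) (j : Fin (N.width n)),
      N.V n r j = if (j : ℕ) = 0 then s else 0 := by
    intro r j
    show (if n = 0 then a (r : ℕ) else if n = n then (if (j : ℕ) = 0 then s else 0)
      else if (j : ℕ) = 2 * (r : ℕ) then (1:ℝ) else 0) = _
    rw [if_neg (by omega), if_pos rfl]
  have hcn : ∀ r : Fin (N.width (n + 1)), N.c n r = 0 := by
    intro r
    show (if n = 0 then b (r : ℕ) else 0) = 0
    rw [if_neg (by omega)]
  show (N.V n *ᵥ N.post x n + N.c n) ⟨0, hlt⟩ = _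
  simp only [Pi.add_apply]
  rw [hcn, add_zero]
  have hsum : (N.V n *ᵥ N.post x n) ⟨0, hlt⟩
      = ∑ j : Fin (N.width n), (if (j : ℕ) = 0 then s else 0) * N.post x n j := by
    simp only [Matrix.mulVec, dotProduct]
    exact Finset.sum_congr rfl fun j _ => by rw [hVn]
  rw [hsum, sum_pick _ s 0 h0]
  congr 1
  exact maxNet_post n hn a b s x n hn le_rfl 0 h0
noncomputable def gridA (g : ℝ → ℝ) (n j : ℕ) : ℝ :=
  2 ^ n * (g (((j : ℝ) + 1) / 2 ^ n) - g ((j : ℝ) / 2 ^ n))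

noncomputable def gridB (g : ℝ → ℝ) (n j : ℕ) : ℝ :=
  g ((j : ℝ) / 2 ^ n) - gridA g n j * ((j : ℝ) / 2 ^ n)

lemma grid_mid (n : ℕ) (g : ℝ → ℝ)
    (hlip : ∀ x ∈ Set.Icc (0 : ℝ) 1, ∀ y ∈ Set.Icc (0 : ℝ) 1, |g x - g y| ≤ |x - y|)
    (x : ℝ) (hx : x ∈ Set.Icc (0 : ℝ) 1) (j : ℕ) (hj : j < 2 ^ n)
    (hu : (j : ℝ) / 2 ^ n ≤ x) (hv : x ≤ ((j : ℝ) + 1) / 2 ^ n) :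
    |gridA g n j * x + gridB g n j - g x| ≤ ((2 : ℝ) ^ n)⁻¹ := by
  have hpow : (0 : ℝ) < 2 ^ n := by positivity
  set u : ℝ := (j : ℝ) / 2 ^ n with hu'
  set v : ℝ := ((j : ℝ) + 1) / 2 ^ n with hv'
  have hj' : ((j : ℝ) + 1) ≤ 2 ^ n := by
    have : (j : ℝ) + 1 ≤ ((2 : ℝ) ^ n : ℝ) := by exact_mod_cast Nat.succ_le_of_lt hj
    simpa using this
  have humem : u ∈ Set.Icc (0 : ℝ) 1 := by
    constructor
    · positivity
    · rw [div_le_one hpow]; linarith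
  have hvmem : v ∈ Set.Icc (0 : ℝ) 1 := by
    constructor
    · positivity
    · rw [div_le_one hpow]; linarith
  have huv : v - u = ((2:ℝ) ^ n)⁻¹ := by rw [hv', hu']; field_simp; ring
  have e1 : |g u - g x| ≤ x - u := by
    have h' := hlip u humem x hx
    have : |u - x| = x - u := by rw [abs_of_nonpos (by linarith : u - x ≤ 0)]; ring
    linarith [h'.trans_eq this]
  have e2 : |g v - g x| ≤ v - x := by
    have h' := hlip v hvmem x hx
    have : |v - x| = v - x := abs_of_nonneg (by linarith)
    linarith [h'.trans_eq this]
  set s : ℝ := (x - u) * 2 ^ n with hs'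
  have hs0 : 0 ≤ s := by
    apply mul_nonneg (by linarith) (by positivity)
  have hs1 : s ≤ 1 := by
    rw [hs']
    have : x - u ≤ ((2:ℝ) ^ n)⁻¹ := by linarith
    calc (x - u) * 2 ^ n ≤ ((2:ℝ) ^ n)⁻¹ * 2 ^ n := by
          apply mul_le_mul_of_nonneg_right this (by positivity)
      _ = 1 := by field_simp
  have hxu : x - u = s * ((2:ℝ)^n)⁻¹ := by rw [hs']; field_simp
  have hA : gridA g n j = 2 ^ n * (g v - g u) := by
    rw [hv', hu']; rfl
  have hB : gridB g n j = g u - gridA g n j * u := by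
    rw [hu']; rfl
  have key : gridA g n j * x + gridB g n j - g x
      = (1 - s) * (g u - g x) + s * (g v - g x) := by
    rw [hB, hA, hs']; ring
  rw [abs_le]
  have b1 := abs_le.mp e1
  have b2 := abs_le.mp e2
  constructor
  · nlinarith [sq_nonneg (1 - 2 * s), mul_nonneg hs0 (sub_nonneg.mpr hs1)]
  · nlinarith [sq_nonneg (1 - 2 * s), mul_nonneg hs0 (sub_nonneg.mpr hs1)]
lemma grid_upper (n : ℕ) (g : ℝ → ℝ) (hg : ConvexOn ℝ (Set.Icc (0 : ℝ) 1) g)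
    (hlip : ∀ x ∈ Set.Icc (0 : ℝ) 1, ∀ y ∈ Set.Icc (0 : ℝ) 1, |g x - g y| ≤ |x - y|)
    (x : ℝ) (hx : x ∈ Set.Icc (0 : ℝ) 1) (j : ℕ) (hj : j < 2 ^ n) :
    gridA g n j * x + gridB g n j ≤ g x + ((2 : ℝ) ^ n)⁻¹ := by
  have hpow : (0 : ℝ) < 2 ^ n := by positivity
  set u : ℝ := (j : ℝ) / 2 ^ n with hu'
  set v : ℝ := ((j : ℝ) + 1) / 2 ^ n with hv'
  have hj' : ((j : ℝ) + 1) ≤ 2 ^ n := by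
    have : (j : ℝ) + 1 ≤ ((2 : ℝ) ^ n : ℝ) := by exact_mod_cast Nat.succ_le_of_lt hj
    simpa using this
  have humem : u ∈ Set.Icc (0 : ℝ) 1 := by
    constructor
    · positivity
    · rw [div_le_one hpow]; linarith
  have hvmem : v ∈ Set.Icc (0 : ℝ) 1 := by
    constructor
    · positivity
    · rw [div_le_one hpow]; linarith
  have huv : v - u = ((2:ℝ) ^ n)⁻¹ := by rw [hv', hu']; field_simp; ring
  have huvlt : u < v := by
    have : (0:ℝ) < ((2:ℝ) ^ n)⁻¹ := by positivity
    linarith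
  have hA : gridA g n j = 2 ^ n * (g v - g u) := by rw [hv', hu']; rfl
  have hB : gridB g n j = g u - gridA g n j * u := by rw [hu']; rfl
  have hAs : gridA g n j = (g v - g u) / (v - u) := by
    rw [hA, huv]; field_simp
  rcases le_or_gt x u with hxu | hxu
  · -- x left of the interval : secant from v
    have hsec := hg.secant_mono hvmem hx humem (by linarith : x ≠ v) (by linarith : u ≠ v) hxu
    have hAeq : (g u - g v) / (u - v) = gridA g n j := by
      rw [hAs]
      rw [div_eq_div_iff (by linarith) (by linarith)]
      ring
    rw [hAeq] at hsec
    have hxv : x - v < 0 := by linarith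
    have := (div_le_iff_of_neg hxv).mp hsec
    -- this : gridA * (x - v) ≤ g x - g v
    have hL : gridA g n j * x + gridB g n j = g v + gridA g n j * (x - v) := by
      rw [hB, hA]
      have h2 : ((2:ℝ)^n) * (v - u) = 1 := by rw [huv]; field_simp
      linear_combination (g v - g u) * h2
    rw [hL]
    have hh : (0:ℝ) ≤ ((2:ℝ) ^ n)⁻¹ := by positivity
    linarith
  rcases le_or_gt v x with hvx | hvx
  · -- x right of the interval : secant from u
    have hsec := hg.secant_mono humem hvmem hx (by linarith : v ≠ u) (by linarith : x ≠ u) hvx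
    have hAeq : (g v - g u) / (v - u) = gridA g n j := hAs.symm
    rw [hAeq] at hsec
    have hxu2 : 0 < x - u := by linarith
    have h2 : gridA g n j * (x - u) ≤ g x - g u := by
      have := (le_div_iff₀ hxu2).mp hsec
      linarith
    have hL : gridA g n j * x + gridB g n j = g u + gridA g n j * (x - u) := by
      rw [hB]; ring
    rw [hL]
    have hh : (0:ℝ) ≤ ((2:ℝ) ^ n)⁻¹ := by positivity
    linarith
  · -- inside the interval
    have := grid_mid n g hlip x hx j hj (by linarith) (by linarith)
    have := (abs_le.mp this).2
    linarith

lemma grid_lower (n : ℕ) (g : ℝ → ℝ)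
    (hlip : ∀ x ∈ Set.Icc (0 : ℝ) 1, ∀ y ∈ Set.Icc (0 : ℝ) 1, |g x - g y| ≤ |x - y|)
    (x : ℝ) (hx : x ∈ Set.Icc (0 : ℝ) 1) :
    ∃ j < 2 ^ n, g x - ((2 : ℝ) ^ n)⁻¹ ≤ gridA g n j * x + gridB g n j := by
  have hpow : (0 : ℝ) < 2 ^ n := by positivity
  set j : ℕ := min ⌊x * 2 ^ n⌋₊ (2 ^ n - 1) with hj'
  have hj : j < 2 ^ n := by
    have h1 : (0:ℕ) < 2 ^ n := Nat.pow_pos (by norm_num)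
    omega
  refine ⟨j, hj, ?_⟩
  have hxnn : 0 ≤ x := hx.1
  have hx1 : x ≤ 1 := hx.2
  have hu : (j : ℝ) / 2 ^ n ≤ x := by
    rw [div_le_iff₀ hpow]
    rcases le_or_gt ⌊x * 2 ^ n⌋₊ (2 ^ n - 1) with h | h
    · have : j = ⌊x * 2 ^ n⌋₊ := by omega
      rw [this]
      exact Nat.floor_le (by positivity)
    · have hjv : j = 2 ^ n - 1 := by omega
      have hge : ((2:ℝ) ^ n) ≤ x * 2 ^ n := by
        have h2 : (2:ℕ) ^ n ≤ ⌊x * 2 ^ n⌋₊ := by omega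
        have := Nat.le_floor_iff (by positivity : (0:ℝ) ≤ x * 2 ^ n) |>.mp h2
        calc ((2:ℝ) ^ n) = ((2 ^ n : ℕ) : ℝ) := by push_cast; ring
          _ ≤ x * 2 ^ n := this
      have : ((j : ℝ)) = 2 ^ n - 1 := by
        rw [hjv]
        have h1 : (1:ℕ) ≤ 2 ^ n := Nat.one_le_two_pow
        push_cast [h1]
        ring
      rw [this]
      linarith
  have hv : x ≤ ((j : ℝ) + 1) / 2 ^ n := by
    rw [le_div_iff₀ hpow]
    rcases le_or_gt ⌊x * 2 ^ n⌋₊ (2 ^ n - 1) with h | h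
    · have : j = ⌊x * 2 ^ n⌋₊ := by omega
      rw [this]
      have := Nat.lt_floor_add_one (x * 2 ^ n)
      linarith
    · have hjv : j = 2 ^ n - 1 := by omega
      have : ((j : ℝ)) + 1 = 2 ^ n := by
        rw [hjv]
        have h1 : (1:ℕ) ≤ 2 ^ n := Nat.one_le_two_pow
        push_cast [h1]
        ring
      rw [this]
      nlinarith
  have := grid_mid n g hlip x hx j hj hu hv
  have := (abs_le.mp this).1
  linarith
lemma maxL_grid_approx (n : ℕ) (g : ℝ → ℝ) (hg : ConvexOn ℝ (Set.Icc (0 : ℝ) 1) g)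
    (hlip : ∀ x ∈ Set.Icc (0 : ℝ) 1, ∀ y ∈ Set.Icc (0 : ℝ) 1, |g x - g y| ≤ |x - y|)
    (x : ℝ) (hx : x ∈ Set.Icc (0 : ℝ) 1) :
    |g x - maxL (gridA g n) (gridB g n) x n 0| ≤ ((2 : ℝ) ^ n)⁻¹ := by
  have hne : (Finset.range (2 ^ n)).Nonempty := Finset.nonempty_range_iff.mpr (by positivity)
  have hM : maxL (gridA g n) (gridB g n) x n 0
      = (Finset.range (2 ^ n)).sup' hne (fun t => gridA g n t * x + gridB g n t) := by
    unfold maxL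
    apply Finset.sup'_congr _ rfl
    intro t _
    have : 2 ^ n * 0 + t = t := by omega
    rw [this]
  rw [hM, abs_le]
  constructor
  · have : (Finset.range (2 ^ n)).sup' hne (fun t => gridA g n t * x + gridB g n t)
        ≤ g x + ((2 : ℝ) ^ n)⁻¹ := by
      apply Finset.sup'_le
      intro t ht
      exact grid_upper n g hg hlip x hx t (Finset.mem_range.mp ht)
    linarith
  · obtain ⟨j, hj, hLj⟩ := grid_lower n g hlip x hx
    have : gridA g n j * x + gridB g n j
        ≤ (Finset.range (2 ^ n)).sup' hne (fun t => gridA g n t * x + gridB g n t) :=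
      Finset.le_sup' (fun t => gridA g n t * x + gridB g n t) (Finset.mem_range.mpr hj)
    linarith

lemma gridA_abs_le (n : ℕ) (g : ℝ → ℝ)
    (hlip : ∀ x ∈ Set.Icc (0 : ℝ) 1, ∀ y ∈ Set.Icc (0 : ℝ) 1, |g x - g y| ≤ |x - y|)
    (j : ℕ) (hj : j < 2 ^ n) : |gridA g n j| ≤ 1 := by
  have hpow : (0 : ℝ) < 2 ^ n := by positivity
  have hj' : ((j : ℝ) + 1) ≤ 2 ^ n := by
    have : (j : ℝ) + 1 ≤ ((2 : ℝ) ^ n : ℝ) := by exact_mod_cast Nat.succ_le_of_lt hj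
    simpa using this
  have humem : (j : ℝ) / 2 ^ n ∈ Set.Icc (0:ℝ) 1 := by
    constructor
    · positivity
    · rw [div_le_one hpow]; linarith
  have hvmem : ((j : ℝ) + 1) / 2 ^ n ∈ Set.Icc (0:ℝ) 1 := by
    constructor
    · positivity
    · rw [div_le_one hpow]; linarith
  have := hlip _ hvmem _ humem
  have hd : |((j : ℝ) + 1) / 2 ^ n - (j : ℝ) / 2 ^ n| = ((2:ℝ) ^ n)⁻¹ := by
    rw [abs_of_nonneg]
    · field_simp; ring
    · rw [sub_nonneg]
      gcongr
      linarith
  calc |gridA g n j| = 2 ^ n * |g (((j:ℝ) + 1) / 2 ^ n) - g ((j:ℝ) / 2 ^ n)| := by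
        unfold gridA
        rw [abs_mul, abs_of_nonneg (le_of_lt hpow)]
    _ ≤ 2 ^ n * ((2:ℝ) ^ n)⁻¹ := by
        apply mul_le_mul_of_nonneg_left _ (le_of_lt hpow)
        rw [← hd]; exact this
    _ = 1 := by field_simp

lemma gridB_abs_le (n : ℕ) (g : ℝ → ℝ)
    (hlip : ∀ x ∈ Set.Icc (0 : ℝ) 1, ∀ y ∈ Set.Icc (0 : ℝ) 1, |g x - g y| ≤ |x - y|)
    (j : ℕ) (hj : j < 2 ^ n) : |gridB g n j| ≤ |g 0| + 2 := by
  have hpow : (0 : ℝ) < 2 ^ n := by positivity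
  have hj' : ((j : ℝ) + 1) ≤ 2 ^ n := by
    have : (j : ℝ) + 1 ≤ ((2 : ℝ) ^ n : ℝ) := by exact_mod_cast Nat.succ_le_of_lt hj
    simpa using this
  have humem : (j : ℝ) / 2 ^ n ∈ Set.Icc (0:ℝ) 1 := by
    constructor
    · positivity
    · rw [div_le_one hpow]; linarith
  have h0 : (0:ℝ) ∈ Set.Icc (0:ℝ) 1 := by constructor <;> norm_num
  have hgj : |g ((j:ℝ) / 2 ^ n)| ≤ |g 0| + 1 := by
    have h1 := hlip _ humem 0 h0
    have h2 : |(j:ℝ) / 2 ^ n - 0| ≤ 1 := by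
      rw [sub_zero, abs_of_nonneg humem.1]; exact humem.2
    calc |g ((j:ℝ) / 2 ^ n)| ≤ |g ((j:ℝ) / 2 ^ n) - g 0| + |g 0| := by
          have := abs_sub_abs_le_abs_sub (g ((j:ℝ) / 2 ^ n)) (g 0)
          have := abs_add_le (g ((j:ℝ) / 2 ^ n) - g 0) (g 0)
          calc |g ((j:ℝ) / 2 ^ n)| = |g ((j:ℝ) / 2 ^ n) - g 0 + g 0| := by ring_nf
            _ ≤ |g ((j:ℝ) / 2 ^ n) - g 0| + |g 0| := abs_add_le _ _
      _ ≤ |g 0| + 1 := by linarith [h1.trans h2]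
  have hA := gridA_abs_le n g hlip j hj
  have hxj : |(j:ℝ) / 2 ^ n| ≤ 1 := by
    rw [abs_of_nonneg humem.1]; exact humem.2
  unfold gridB
  calc |g ((j:ℝ) / 2 ^ n) - gridA g n j * ((j:ℝ) / 2 ^ n)|
      ≤ |g ((j:ℝ) / 2 ^ n)| + |gridA g n j * ((j:ℝ) / 2 ^ n)| := abs_sub _ _
    _ ≤ (|g 0| + 1) + |gridA g n j| * |(j:ℝ) / 2 ^ n| := by
        rw [abs_mul]; linarith
    _ ≤ (|g 0| + 1) + 1 * 1 := by
        apply add_le_add le_rfl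
        exact mul_le_mul hA hxj (abs_nonneg _) (by norm_num)
    _ = |g 0| + 2 := by ring

lemma sum_pow_Icc (n : ℕ) : ∑ i ∈ Finset.Icc 1 n, 2 ^ i = 2 ^ (n + 1) - 2 := by
  induction n with
  | zero => simp
  | succ n ih =>
    rw [Finset.sum_Icc_succ_top (by omega : 1 ≤ n + 1), ih]
    have h1 : (2:ℕ) ≤ 2 ^ (n + 1) := by
      have := Nat.pow_le_pow_right (by norm_num : 1 ≤ 2) (by omega : 1 ≤ n + 1)
      simpa using this
    have h2 : (2:ℕ) ^ (n + 2) = 2 ^ (n + 1) + 2 ^ (n + 1) := by ring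
    omega

lemma maxNet_size (n : ℕ) (hn : 1 ≤ n) (a b : ℕ → ℝ) (s : ℝ) :
    (maxNet n hn a b s).size = 2 ^ (n + 1) - 2 := by
  unfold GroupSortNet.size
  have hd : (maxNet n hn a b s).depth - 1 = n := rfl
  rw [hd]
  have step1 : ∑ i ∈ Finset.Icc 1 n, (maxNet n hn a b s).width i
      = ∑ i ∈ Finset.Icc 1 n, 2 ^ (n + 1 - i) := by
    apply Finset.sum_congr rfl
    intro i hi
    rw [Finset.mem_Icc] at hi
    exact maxNet_width n hn a b s i hi.1 hi.2
  have step2 : ∑ i ∈ Finset.Icc 1 n, 2 ^ (n + 1 - i) = ∑ i ∈ Finset.Icc 1 n, 2 ^ i := by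
    apply Finset.sum_nbij' (i := fun a => n + 1 - a) (j := fun a => n + 1 - a) <;>
      (intro a ha; simp only [Finset.mem_Icc] at ha ⊢) <;> omega
  rw [step1, step2, sum_pow_Icc n]

/-- The constant network. -/
noncomputable def constNet (r : ℝ) : GroupSortNet 2 1 where
  depth := 1
  depth_pos := le_rfl
  width := fun _ => 1
  width_in := rfl
  width_out := rfl
  width_div := by intro i h1 h2; omega
  V := fun _ _ _ => 0
  c := fun _ _ => r

lemma constNet_eval (r : ℝ) (x : Fin 1 → ℝ) : (constNet r).eval x = r := by
  have h1 : (0:ℕ) < (constNet r).width (0 + 1) := Nat.one_pos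
  show ((constNet r).V 0 *ᵥ (constNet r).post x 0 + (constNet r).c 0) ⟨0, h1⟩ = r
  simp only [Pi.add_apply]
  have : ((constNet r).V 0 *ᵥ (constNet r).post x 0) ⟨0, h1⟩ = 0 := by
    simp only [Matrix.mulVec, dotProduct]
    apply Finset.sum_eq_zero
    intro j _
    show (0:ℝ) * _ = 0
    ring
  rw [this, zero_add]
  rfl
/-- Approximation of `1`-Lipschitz convex (or concave) functions on `[0,1]` by GroupSort
networks of grouping size `2` satisfying Assumption 1: with `n = ⌈log₂(1/ε)⌉`, the network
has depth `n + 1` and size at most `2 ⬝ 2^n - 1` (in particular `O(1/ε)`). -/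
theorem groupSortNet_approx_lipschitz_real_convex (ε : ℝ) (hε : 0 < ε) (f : ℝ → ℝ)
    (hlip : ∀ x ∈ Set.Icc (0 : ℝ) 1, ∀ y ∈ Set.Icc (0 : ℝ) 1, |f x - f y| ≤ |x - y|)
    (hconv : ConvexOn ℝ (Set.Icc (0 : ℝ) 1) f ∨ ConcaveOn ℝ (Set.Icc (0 : ℝ) 1) f) :
    ∃ N : GroupSortNet 2 1, N.Assumption1 ∧
      (∀ x ∈ Set.Icc (0 : ℝ) 1, |f x - N.eval (fun _ => x)| ≤ ε) ∧
      N.depth = ⌈Real.logb 2 (1 / ε)⌉₊ + 1 ∧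
      N.size ≤ 2 * 2 ^ ⌈Real.logb 2 (1 / ε)⌉₊ - 1 := by
  set n : ℕ := ⌈Real.logb 2 (1 / ε)⌉₊ with hn'
  rcases Nat.eq_zero_or_pos n with hn0 | hnpos
  · -- trivial case : ε ≥ 1, use the constant network
    have hε1 : 1 ≤ ε := by
      have hle : Real.logb 2 (1 / ε) ≤ 0 := by
        by_contra hcon
        push_neg at hcon
        have := Nat.ceil_pos.mpr hcon
        omega
      have h1 : 1 / ε = (2 : ℝ) ^ Real.logb 2 (1 / ε) :=
        (Real.rpow_logb (by norm_num) (by norm_num) (by positivity)).symm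
      have h2 : (2 : ℝ) ^ Real.logb 2 (1 / ε) ≤ (2:ℝ) ^ (0:ℝ) :=
        Real.rpow_le_rpow_of_exponent_le (by norm_num) hle
      rw [Real.rpow_zero] at h2
      have : 1 / ε ≤ 1 := by linarith [h1 ▸ h2]
      rw [div_le_one hε] at this
      exact this
    refine ⟨constNet (f 2⁻¹), ?_, ?_, ?_, ?_⟩
    · refine ⟨?_, ?_, |f 2⁻¹|, abs_nonneg _, ?_⟩
      · intro r
        have : ∀ j : Fin ((constNet (f 2⁻¹)).width 0),
            ((constNet (f 2⁻¹)).V 0 r j) ^ 2 = 0 := fun j => by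
          show (0:ℝ)^2 = 0; ring
        rw [Finset.sum_congr rfl fun j _ => this j, Finset.sum_const]
        simp
      · intro i h1 h2 r
        have : ∀ j : Fin ((constNet (f 2⁻¹)).width i),
            |((constNet (f 2⁻¹)).V i r j)| = 0 := fun j => abs_zero
        rw [Finset.sum_congr rfl fun j _ => this j, Finset.sum_const]
        simp
      · intro i _ r; exact le_refl _
    · intro x hx
      rw [constNet_eval]
      have hmem : (2:ℝ)⁻¹ ∈ Set.Icc (0:ℝ) 1 := by constructor <;> norm_num
      have h1 := hlip x hx 2⁻¹ hmem
      have h2 : |x - 2⁻¹| ≤ 2⁻¹ := by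
        rw [abs_le]; constructor <;> [linarith [hx.1]; linarith [hx.2]]
      linarith
    · show 1 = n + 1; omega
    · show (constNet (f 2⁻¹)).size ≤ 2 * 2 ^ n - 1
      have : (constNet (f 2⁻¹)).size = 0 := by
        unfold GroupSortNet.size
        show ∑ i ∈ Finset.Icc 1 0, _ = 0
        rw [Finset.Icc_eq_empty (by omega)]
        rfl
      rw [this]; omega
  · -- main case : n ≥ 1
    have hpow : (0:ℝ) < 2 ^ n := by positivity
    have hεn : ((2:ℝ) ^ n)⁻¹ ≤ ε := by
      have hle : Real.logb 2 (1 / ε) ≤ (n : ℝ) := Nat.le_ceil _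
      have h1 : 1 / ε = (2 : ℝ) ^ Real.logb 2 (1 / ε) :=
        (Real.rpow_logb (by norm_num) (by norm_num) (by positivity)).symm
      have h2 : (2 : ℝ) ^ Real.logb 2 (1 / ε) ≤ (2:ℝ) ^ (n:ℝ) :=
        Real.rpow_le_rpow_of_exponent_le (by norm_num) hle
      rw [Real.rpow_natCast] at h2
      have h3 : 1 / ε ≤ 2 ^ n := by linarith [h1 ▸ h2]
      rw [div_le_iff₀ hε] at h3
      rw [inv_le_iff_one_le_mul₀ hpow]
      nlinarith
    -- choose the convex representative
    obtain ⟨s, g, hs, hgconv, hglip⟩ :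
        ∃ (s : ℝ) (g : ℝ → ℝ), (|s| = 1 ∧ ∀ y, f y = s * g y) ∧
          ConvexOn ℝ (Set.Icc (0:ℝ) 1) g ∧
          (∀ x ∈ Set.Icc (0 : ℝ) 1, ∀ y ∈ Set.Icc (0 : ℝ) 1, |g x - g y| ≤ |x - y|) := by
      rcases hconv with hcv | hcc
      · exact ⟨1, f, ⟨by norm_num, fun y => by ring⟩, hcv, hlip⟩
      · refine ⟨-1, fun y => -f y, ⟨by norm_num, fun y => by ring⟩, ?_, ?_⟩
        · exact hcc.neg
        · intro x hx y hy
          have := hlip x hx y hy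
          calc |(-f x) - (-f y)| = |f x - f y| := by rw [← abs_neg]; congr 1; ring
            _ ≤ |x - y| := this
    obtain ⟨hs1, hfs⟩ := hs
    set N := maxNet n hnpos (gridA g n) (gridB g n) s with hN
    have hw1 : N.width 1 = 2 ^ n := by
      have := maxNet_width n hnpos (gridA g n) (gridB g n) s 1 le_rfl hnpos
      have h' : n + 1 - 1 = n := by omega
      rw [← hN] at this; rw [this, h']
    refine ⟨N, ⟨?_, ?_, |g 0| + 2, by positivity, ?_⟩, ?_, ?_, ?_⟩
    · -- first layer : ℓ² rows
      intro r
      have hV : ∀ j : Fin (N.width 0), N.V 0 r j = gridA g n (r : ℕ) := fun j => rfl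
      rw [Finset.sum_congr rfl fun j _ => by rw [hV j]]
      rw [Finset.sum_const, Finset.card_univ, Fintype.card_fin]
      have hw0 : N.width 0 = 1 := N.width_in
      rw [hw0, one_smul]
      have hr : (r : ℕ) < 2 ^ n := lt_of_lt_of_eq r.isLt hw1
      have hA := gridA_abs_le n g hglip (r : ℕ) hr
      nlinarith [abs_nonneg (gridA g n (r : ℕ)), sq_abs (gridA g n (r : ℕ))]
    · -- later layers : ℓ¹ rows
      intro i h1 h2 r
      have h2' : i ≤ n := by
        have : N.depth = n + 1 := rfl
        omega
      rcases eq_or_lt_of_le h2' with hin | hin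
      · -- final layer
        subst hin
        have hwn : N.width n = 2 := by
          have := maxNet_width n hnpos (gridA g n) (gridB g n) s n hnpos le_rfl
          rw [← hN] at this; rw [this]
          have h' : n + 1 - n = 1 := by omega
          rw [h', pow_one]
        have hV : ∀ j : Fin (N.width n), N.V n r j = if (j : ℕ) = 0 then s else 0 := by
          intro j
          show (if n = 0 then gridA g n (r : ℕ) else if n = n then (if (j : ℕ) = 0 then s else 0)
            else if (j : ℕ) = 2 * (r : ℕ) then (1:ℝ) else 0) = _
          rw [if_neg (by omega), if_pos rfl]
        rw [Finset.sum_congr rfl fun j _ => by rw [hV j]]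
        rw [sum_pick_abs s 0 (by omega), hs1]
      · -- middle selector layers
        have hwi : N.width i = 2 ^ (n + 1 - i) := maxNet_width n hnpos _ _ s i h1 h2'
        have hwsucc : N.width (i + 1) = 2 ^ (n - i) :=
          (maxNet_width n hnpos _ _ s (i + 1) (by omega) (by omega)).trans (by congr 1; omega)
        have hr2 : 2 * (r : ℕ) < N.width i := by
          have h1' : (r : ℕ) < 2 ^ (n - i) := lt_of_lt_of_eq r.isLt hwsucc
          have h2'' : 2 * 2 ^ (n - i) = 2 ^ (n + 1 - i) := by
            rw [← pow_succ']; congr 1; omega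
          have h3' : 2 * (r : ℕ) < 2 ^ (n + 1 - i) := by omega
          exact lt_of_lt_of_eq h3' hwi.symm
        have hV : ∀ j : Fin (N.width i),
            N.V i r j = if (j : ℕ) = 2 * (r : ℕ) then (1:ℝ) else 0 := by
          intro j
          show (if i = 0 then gridA g n (r : ℕ) else if i = n then (if (j : ℕ) = 0 then s else 0)
            else if (j : ℕ) = 2 * (r : ℕ) then (1:ℝ) else 0) = _
          rw [if_neg (by omega), if_neg (by omega)]
        rw [Finset.sum_congr rfl fun j _ => by rw [hV j]]
        rw [sum_pick_abs 1 (2 * (r : ℕ)) hr2]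
        norm_num
    · -- offsets
      intro i _ r
      rcases Nat.eq_zero_or_pos i with hi0 | hipos
      · subst hi0
        have hc : N.c 0 r = gridB g n (r : ℕ) := rfl
        rw [hc]
        have hr : (r : ℕ) < 2 ^ n := lt_of_lt_of_eq r.isLt hw1
        exact gridB_abs_le n g hglip (r : ℕ) hr
      · have hc : N.c i r = 0 := by
          show (if i = 0 then gridB g n (r : ℕ) else 0) = 0
          rw [if_neg (by omega)]
        rw [hc, abs_zero]; positivity
    · -- approximation bound
      intro x hx
      have heval := maxNet_eval n hnpos (gridA g n) (gridB g n) s (fun _ => x)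
      rw [heval]
      have happrox := maxL_grid_approx n g hgconv hglip x hx
      have hfx : f x = s * g x := hfs x
      have hss : s * s = 1 := by
        rcases abs_eq (by norm_num : (0:ℝ) ≤ 1) |>.mp hs1 with h | h <;> rw [h] <;> norm_num
      have : f x - s * maxL (gridA g n) (gridB g n) ((fun _ => x) 0) n 0
          = s * (g x - maxL (gridA g n) (gridB g n) x n 0) := by
        have hbeta : ((fun _ : Fin 1 => x) 0) = x := rfl
        rw [hfx, hbeta]; ring
      rw [this, abs_mul, hs1, one_mul]
      exact happrox.trans hεn
    · show n + 1 = n + 1; rfl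
    · have := maxNet_size n hnpos (gridA g n) (gridB g n) s
      rw [← hN] at this
      rw [this]
      have h2 : (2:ℕ) ^ (n + 1) = 2 * 2 ^ n := by ring
      omega
end
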